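/- For all real s ≥ 4 + 2√2, one has π(4s − 3)/(3s² + 8s) ≤ arctan(1/√(s−1)). -/

import Mathlib

open Real Set

lemma arctan_concave : StrictConcaveOn ℝ (Ici (0:ℝ)) Real.arctan := by
  apply strictConcaveOn_of_deriv2_neg (convex_Ici 0) Real.continuous_arctan.continuousOn
  intro x hx
  simp only [interior_Ici, mem_Ioi] at hx
  have hne : (1 + x ^ 2) ≠ 0 := by positivity
  have h2 : HasDerivAt (fun y : ℝ => 1 / (1 + y ^ 2)) (-(2*x) / (1 + x ^ 2)^2) x := by
    have hd : HasDerivAt (fun y : ℝ => 1 + y ^ 2) (2*x) x := by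
      simpa using ((hasDerivAt_pow 2 x).const_add 1)
    have : HasDerivAt (fun y : ℝ => 1 / (1 + y ^ 2)) _ x := (hasDerivAt_const x (1:ℝ)).div hd hne
    convert this using 1
    ring
  have hd2 : deriv (deriv Real.arctan) x = -(2*x) / (1 + x ^ 2)^2 := by
    rw [Real.deriv_arctan]; exact h2.deriv
  show deriv^[2] Real.arctan x < 0
  rw [Function.iterate_succ, Function.iterate_one, Function.comp_apply, hd2]
  apply div_neg_of_neg_of_pos
  · linarith
  · positivity

lemma tan_pi8 : Real.arctan (Real.sqrt 2 - 1) = Real.pi / 8 := by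
  have hpi : Real.tan (Real.pi / 8) = Real.sqrt 2 - 1 := by
    rw [Real.tan_eq_sin_div_cos, Real.sin_pi_div_eight, Real.cos_pi_div_eight]
    have h2 : (0:ℝ) ≤ 2 - Real.sqrt 2 := by nlinarith [Real.sq_sqrt (by norm_num : (2:ℝ) ≥ 0), Real.sqrt_nonneg 2]
    have key : Real.sqrt (2 - Real.sqrt 2) = (Real.sqrt 2 - 1) * Real.sqrt (2 + Real.sqrt 2) := by
      have h1 : (0:ℝ) ≤ Real.sqrt 2 - 1 := by
        nlinarith [Real.sq_sqrt (by norm_num : (2:ℝ) ≥ 0), Real.sqrt_nonneg 2]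
      rw [← Real.sqrt_sq h1, ← Real.sqrt_mul (by positivity)]
      congr 1
      nlinarith [Real.sq_sqrt (by norm_num : (2:ℝ) ≥ 0)]
    rw [key]
    have hpos : (0:ℝ) < Real.sqrt (2 + Real.sqrt 2) := Real.sqrt_pos.2 (by positivity)
    field_simp
  rw [← hpi, Real.arctan_tan]
  · linarith [Real.pi_pos]
  · linarith [Real.pi_pos]

lemma chord (t : ℝ) (h0 : 0 ≤ t) (h1 : t ≤ Real.sqrt 2 - 1) :
    (Real.sqrt 2 + 1) * (Real.pi / 8) * t ≤ Real.arctan t := by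
  have hs2 : Real.sqrt 2 ^ 2 = 2 := Real.sq_sqrt (by norm_num)
  have hs2' : (1:ℝ) < Real.sqrt 2 := by nlinarith [Real.sqrt_nonneg 2]
  have hwpos : 0 < Real.sqrt 2 - 1 := by linarith
  have hane : Real.sqrt 2 - 1 ≠ 0 := ne_of_gt hwpos
  have hconc := arctan_concave.concaveOn
  have hμ0 : 0 ≤ t / (Real.sqrt 2 - 1) := by positivity
  have hμ1 : t / (Real.sqrt 2 - 1) ≤ 1 := by rw [div_le_one hwpos]; exact h1
  have hcomb := hconc.2 (mem_Ici.2 (le_refl (0:ℝ))) (mem_Ici.2 hwpos.le)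
    (by linarith : (0:ℝ) ≤ 1 - t / (Real.sqrt 2 - 1)) hμ0 (by ring)
  simp only [smul_eq_mul, mul_zero, Real.arctan_zero, zero_add] at hcomb
  have heq : t / (Real.sqrt 2 - 1) * (Real.sqrt 2 - 1) = t := by field_simp
  rw [heq] at hcomb
  have hval : t / (Real.sqrt 2 - 1) * Real.arctan (Real.sqrt 2 - 1)
      = (Real.sqrt 2 + 1) * (Real.pi / 8) * t := by
    rw [tan_pi8]
    have ht : t / (Real.sqrt 2 - 1) = t * (Real.sqrt 2 + 1) := by
      rw [div_eq_iff hane]; linear_combination (-t) * hs2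
    rw [ht]; ring
  rw [hval] at hcomb
  exact hcomb

theorem stmt_15 (s : ℝ) (hs : 4 + 2 * Real.sqrt 2 ≤ s) :
    Real.pi * (4 * s - 3) / (3 * s ^ 2 + 8 * s) ≤ Real.arctan (1 / Real.sqrt (s - 1)) := by
  have hs2 : Real.sqrt 2 ^ 2 = 2 := Real.sq_sqrt (by norm_num)
  have hs2' : (1:ℝ) < Real.sqrt 2 := by nlinarith [Real.sqrt_nonneg 2]
  have hs1 : (0:ℝ) ≤ s - 1 := by linarith
  set x : ℝ := Real.sqrt (s - 1) with hx
  have hx2 : x ^ 2 = s - 1 := Real.sq_sqrt hs1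
  have hxge : Real.sqrt 2 + 1 ≤ x := by
    have : (Real.sqrt 2 + 1) ^ 2 ≤ s - 1 := by nlinarith
    nlinarith [Real.sqrt_nonneg (s-1), hx2]
  have hxpos : 0 < x := by linarith
  have ht1 : 1 / x ≤ Real.sqrt 2 - 1 := by
    rw [div_le_iff₀ hxpos]
    nlinarith
  have hchord := chord (1/x) (by positivity) ht1
  refine le_trans ?_ hchord
  have hden : 0 < 3 * s ^ 2 + 8 * s := by nlinarith
  rw [div_le_iff₀ hden]
  have hπ := Real.pi_pos
  have hsx : s = x ^ 2 + 1 := by linarith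
  have key : 8 * x * (4 * s - 3) ≤ (Real.sqrt 2 + 1) * (3 * s ^ 2 + 8 * s) := by
    set r : ℝ := Real.sqrt 2 with hr
    have hy : 0 ≤ x - (r + 1) := by linarith
    have h3 : r ^ 3 = 2 * r := by rw [pow_succ, hs2]
    have h4 : r ^ 4 = 4 := by nlinarith [hs2]
    have t1 : 0 ≤ (x - (r+1)) * (8*r - 8) := mul_nonneg hy (by linarith)
    have t2 : 0 ≤ (x - (r+1))^2 * (8*r + 44) := mul_nonneg (sq_nonneg _) (by linarith)
    have t3 : 0 ≤ (x - (r+1))^3 * (24*r + 4) := mul_nonneg (pow_nonneg hy 3) (by linarith)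
    have t4 : 0 ≤ (x - (r+1))^4 * (3*r + 3) := mul_nonneg (pow_nonneg hy 4) (by linarith)
    rw [hsx]
    nlinarith [t1, t2, t3, t4, hs2, h3, h4]
  calc Real.pi * (4 * s - 3) = Real.pi / (8 * x) * (8 * x * (4 * s - 3)) := by field_simp
    _ ≤ Real.pi / (8 * x) * ((Real.sqrt 2 + 1) * (3 * s ^ 2 + 8 * s)) := by
        apply mul_le_mul_of_nonneg_left key; positivity
    _ = (Real.sqrt 2 + 1) * (Real.pi / 8) * (1 / x) * (3 * s ^ 2 + 8 * s) := by
        field_simp
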